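/- Let ρ(x) = max(0,x) be the ReLU function applied coordinate-wise. For network parameters θ = (W_1,…,W_L,b_1,…,b_L) and θ' = (W'_1,…,W'_L,b'_1,…,b'_L) with matching dimensions, any exponent q ∈ [1,∞], and any input x ∈ ℝ^{N_0}, the realizations satisfy ‖R_θ(x) − R_{θ'}(x)‖_q ≤ Σ_{ℓ=1}^{L} (∏_{k=ℓ+1}^{L} ‖W_k‖_{op,q}) · ‖W_ℓ − W'_ℓ‖_{op,q} · ‖R_{θ'_{ℓ−1}}(x)‖_q + Σ_{ℓ=1}^{L} (∏_{k=ℓ+1}^{L} ‖W_k‖_{op,q}) · ‖b_ℓ − b'_ℓ‖_q, where θ'_{ℓ−1} denotes the truncated network (W'_1,…,W'_{ℓ−1},b'_1,…,b'_{ℓ−1}) with the convention R_{θ'_0}(x) = x and empty products equal to 1. -/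

import Mathlib

open scoped ENNReal BigOperators

noncomputable section

def relu (x : ℝ) : ℝ := max 0 x

def hiddenLayer (N : ℕ → ℕ) (W : ∀ ℓ : ℕ, Matrix (Fin (N (ℓ + 1))) (Fin (N ℓ)) ℝ)
    (b : ∀ ℓ : ℕ, Fin (N (ℓ + 1)) → ℝ) : (ℓ : ℕ) → (Fin (N 0) → ℝ) → Fin (N ℓ) → ℝ
  | 0, x => x
  | ℓ + 1, x => fun i => relu ((W ℓ).mulVec (hiddenLayer N W b ℓ x) i + b ℓ i)

def realization (N : ℕ → ℕ) (W : ∀ ℓ : ℕ, Matrix (Fin (N (ℓ + 1))) (Fin (N ℓ)) ℝ)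
    (b : ∀ ℓ : ℕ, Fin (N (ℓ + 1)) → ℝ) (L : ℕ) (x : Fin (N 0) → ℝ) : Fin (N L) → ℝ :=
  match L with
  | 0 => x
  | ℓ + 1 => (W ℓ).mulVec (hiddenLayer N W b ℓ x) + b ℓ

def qnorm (q : ℝ≥0∞) [Fact (1 ≤ q)] {n : ℕ} (x : Fin n → ℝ) : ℝ :=
  ‖(WithLp.equiv q (Fin n → ℝ)).symm x‖

def opqnorm (q : ℝ≥0∞) [Fact (1 ≤ q)] {m n : ℕ} (M : Matrix (Fin m) (Fin n) ℝ) : ℝ :=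
  sInf {c : ℝ | 0 ≤ c ∧ ∀ x : Fin n → ℝ, qnorm q (M.mulVec x) ≤ c * qnorm q x}

def rectId (m n : ℕ) : Matrix (Fin m) (Fin n) ℝ :=
  Matrix.of fun i j => if (i : ℕ) = (j : ℕ) then 1 else 0

variable (q : ℝ≥0∞) [Fact (1 ≤ q)]

def mulVecCLM {m n : ℕ} (M : Matrix (Fin m) (Fin n) ℝ) :
    PiLp q (fun _ : Fin n => ℝ) →L[ℝ] PiLp q (fun _ : Fin m => ℝ) :=
  LinearMap.toContinuousLinearMap
    ((WithLp.linearEquiv q ℝ (Fin m → ℝ)).symm.toLinearMap ∘ₗ M.mulVecLin ∘ₗ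
      (WithLp.linearEquiv q ℝ (Fin n → ℝ)).toLinearMap)

lemma opqnorm_eq {m n : ℕ} (M : Matrix (Fin m) (Fin n) ℝ) :
    opqnorm q M = ‖mulVecCLM q M‖ := by
  rw [ContinuousLinearMap.norm_def, opqnorm]
  congr 1; ext c
  refine and_congr_right fun _ => ?_
  constructor
  · intro h y; exact h (WithLp.equiv q _ y)
  · intro h y; exact h ((WithLp.equiv q _).symm y)

lemma opqnorm_nonneg {m n : ℕ} (M : Matrix (Fin m) (Fin n) ℝ) : 0 ≤ opqnorm q M := by
  rw [opqnorm_eq]; exact norm_nonneg _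

lemma qnorm_mulVec_le {m n : ℕ} (M : Matrix (Fin m) (Fin n) ℝ) (x : Fin n → ℝ) :
    qnorm q (M.mulVec x) ≤ opqnorm q M * qnorm q x := by
  rw [opqnorm_eq]
  exact (mulVecCLM q M).le_opNorm ((WithLp.equiv q _).symm x)

lemma qnorm_mono {n : ℕ} {u v : Fin n → ℝ} (h : ∀ i, |u i| ≤ |v i|) :
    qnorm q u ≤ qnorm q v := by
  unfold qnorm
  rcases eq_or_ne q ∞ with hq | hq
  · subst hq
    rw [PiLp.norm_eq_ciSup, PiLp.norm_eq_ciSup]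
    rcases Nat.eq_zero_or_pos n with hn | hn
    · subst hn; simp [Real.iSup_of_isEmpty]
    have : Nonempty (Fin n) := Fin.pos_iff_nonempty.mp hn
    exact ciSup_mono (Finite.bddAbove_range _) (fun i => by
      simpa [Real.norm_eq_abs] using h i)
  · have hq0 : 0 < q.toReal := ENNReal.toReal_pos (by
      intro h0; exact absurd (h0 ▸ (Fact.out : 1 ≤ q)) (by simp)) hq
    rw [PiLp.norm_eq_sum hq0, PiLp.norm_eq_sum hq0]
    apply Real.rpow_le_rpow (by positivity) ?_ (by positivity)
    apply Finset.sum_le_sum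
    intro i _
    exact Real.rpow_le_rpow (norm_nonneg _) (by simpa [Real.norm_eq_abs] using h i) hq0.le

lemma qnorm_add_le {n : ℕ} (u v : Fin n → ℝ) : qnorm q (u + v) ≤ qnorm q u + qnorm q v := by
  unfold qnorm
  rw [show (WithLp.equiv q (Fin n → ℝ)).symm (u + v)
      = (WithLp.equiv q (Fin n → ℝ)).symm u + (WithLp.equiv q (Fin n → ℝ)).symm v from rfl]
  exact norm_add_le _ _

lemma abs_relu_sub_relu (a c : ℝ) : |relu a - relu c| ≤ |a - c| := by
  simpa [relu, max_comm] using abs_max_sub_max_le_abs a c 0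

lemma abs_relu_le (a : ℝ) : |relu a| ≤ |a| := by
  simpa [relu] using abs_relu_sub_relu a 0


/-- Layerwise perturbation bound for ReLU network realizations:
for parameters `θ = (W, b)` and `θ' = (W', b')` with matching dimensions, any `q ∈ [1,∞]`
and any input `x`, the `q`-norm of the difference of realizations is bounded by the sum over
layers of the products of operator norms of subsequent weight matrices times the perturbation
of the current layer (weights acting on the truncated realization of `θ'`, and biases). -/
theorem relu_network_perturbation_bound (q : ℝ≥0∞) [Fact (1 ≤ q)]
    (N : ℕ → ℕ) (L : ℕ) (hL : 1 ≤ L)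
    (W W' : ∀ ℓ : ℕ, Matrix (Fin (N (ℓ + 1))) (Fin (N ℓ)) ℝ)
    (b b' : ∀ ℓ : ℕ, Fin (N (ℓ + 1)) → ℝ) (x : Fin (N 0) → ℝ) :
    qnorm q (realization N W b L x - realization N W' b' L x) ≤
      (∑ ℓ ∈ Finset.range L,
          (∏ k ∈ Finset.Ico (ℓ + 1) L, opqnorm q (W k)) * opqnorm q (W ℓ - W' ℓ) *
            qnorm q (realization N W' b' ℓ x)) +
        ∑ ℓ ∈ Finset.range L,
          (∏ k ∈ Finset.Ico (ℓ + 1) L, opqnorm q (W k)) * qnorm q (b ℓ - b' ℓ) := by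
  clear hL
  -- hiddenLayer vs realization facts
  have hdiff_le : ∀ ℓ,
      qnorm q (hiddenLayer N W b ℓ x - hiddenLayer N W' b' ℓ x) ≤
        qnorm q (realization N W b ℓ x - realization N W' b' ℓ x) := by
    intro ℓ
    match ℓ with
    | 0 => exact le_refl _
    | ℓ + 1 =>
      apply qnorm_mono
      intro i
      exact abs_relu_sub_relu _ _
  have hval_le : ∀ ℓ,
      qnorm q (hiddenLayer N W' b' ℓ x) ≤ qnorm q (realization N W' b' ℓ x) := by
    intro ℓ
    match ℓ with
    | 0 => exact le_refl _
    | ℓ + 1 =>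
      apply qnorm_mono
      intro i
      exact abs_relu_le _
  induction L with
  | zero => simp [realization, qnorm]
  | succ L ih =>
    set h := hiddenLayer N W b L x
    set h' := hiddenLayer N W' b' L x
    have hdecomp : realization N W b (L+1) x - realization N W' b' (L+1) x
        = (W L).mulVec (h - h') + (((W L - W' L).mulVec h') + (b L - b' L)) := by
      show (W L).mulVec h + b L - ((W' L).mulVec h' + b' L) = _
      rw [Matrix.mulVec_sub, Matrix.sub_mulVec]
      abel
    rw [hdecomp]
    have step1 := (qnorm_add_le q ((W L).mulVec (h - h'))
        (((W L - W' L).mulVec h') + (b L - b' L))).trans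
      (add_le_add le_rfl (qnorm_add_le q ((W L - W' L).mulVec h') (b L - b' L)))
    have b1 := (qnorm_mulVec_le q (W L) (h - h')).trans
      (mul_le_mul_of_nonneg_left ((hdiff_le L).trans (ih)) (opqnorm_nonneg q (W L)))
    have b2 := (qnorm_mulVec_le q (W L - W' L) h').trans
      (mul_le_mul_of_nonneg_left (hval_le L) (opqnorm_nonneg q (W L - W' L)))
    refine (step1.trans (add_le_add b1 (add_le_add b2 le_rfl))).trans (le_of_eq ?_)
    rw [Finset.sum_range_succ, Finset.sum_range_succ, Finset.Ico_self, Finset.prod_empty,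
      one_mul]
    have e1 : ∑ ℓ ∈ Finset.range L,
        (∏ k ∈ Finset.Ico (ℓ + 1) (L + 1), opqnorm q (W k)) * opqnorm q (W ℓ - W' ℓ) *
          qnorm q (realization N W' b' ℓ x)
        = ∑ ℓ ∈ Finset.range L, opqnorm q (W L) *
            ((∏ k ∈ Finset.Ico (ℓ + 1) L, opqnorm q (W k)) * opqnorm q (W ℓ - W' ℓ) *
              qnorm q (realization N W' b' ℓ x)) :=
      Finset.sum_congr rfl fun ℓ hℓ => by
        rw [Finset.prod_Ico_succ_top (Nat.succ_le_of_lt (Finset.mem_range.mp hℓ))]; ring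
    have e2 : ∑ ℓ ∈ Finset.range L,
        (∏ k ∈ Finset.Ico (ℓ + 1) (L + 1), opqnorm q (W k)) * qnorm q (b ℓ - b' ℓ)
        = ∑ ℓ ∈ Finset.range L, opqnorm q (W L) *
            ((∏ k ∈ Finset.Ico (ℓ + 1) L, opqnorm q (W k)) * qnorm q (b ℓ - b' ℓ)) :=
      Finset.sum_congr rfl fun ℓ hℓ => by
        rw [Finset.prod_Ico_succ_top (Nat.succ_le_of_lt (Finset.mem_range.mp hℓ))]; ring
    rw [e1, e2, ← Finset.mul_sum, ← Finset.mul_sum]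
    ring
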